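/- Let n ≥ 2 and let b, w be nonnegative real numbers with n·b² + n·(n−1)·w² = 1. Let B be the n×n real matrix with B_{ii} = b for all i and B_{ij} = w for all i ≠ j, and set P := Σ_i |B_{ii}|² = n·b². Then (Bᴴ B)_{ii} = b² + (n−1)·w² for all i, (Bᴴ B)_{ij} = 2·b·w + (n−2)·w² for all i ≠ j, and (1/n)·Σ_{i≠j} |(Bᴴ B)_{ij}| = ((n−2)/n)·(1−P) + (2/n)·√((n−1)·P·(1−P)). -/

import Mathlib

open Matrix Finset

/-- Attainability part of Lemma 1: the matrix with constant diagonal `b` and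
constant off-diagonal `w` (with `n b² + n(n-1) w² = 1`) saturates the duality bound,
with `P = ∑ i, |B i i|² = n b²`. -/
theorem duality_bound_attained (n : ℕ) (hn : 2 ≤ n) (b w : ℝ)
    (hb : 0 ≤ b) (hw : 0 ≤ w)
    (hnorm : (n : ℝ) * b ^ 2 + (n : ℝ) * ((n : ℝ) - 1) * w ^ 2 = 1)
    (B : Matrix (Fin n) (Fin n) ℂ)
    (hBdef : ∀ i j, B i j = if i = j then (b : ℂ) else (w : ℂ))
    (P : ℝ) (hP : P = ∑ i, ‖B i i‖ ^ 2) :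
    P = (n : ℝ) * b ^ 2 ∧
    (∀ i, (Bᴴ * B) i i = ((b ^ 2 + ((n : ℝ) - 1) * w ^ 2 : ℝ) : ℂ)) ∧
    (∀ i j, i ≠ j → (Bᴴ * B) i j = ((2 * b * w + ((n : ℝ) - 2) * w ^ 2 : ℝ) : ℂ)) ∧
    (1 / (n : ℝ)) * ∑ i, ∑ j ∈ univ.filter (fun j => j ≠ i),
        ‖(Bᴴ * B) i j‖ =
      (((n : ℝ) - 2) / n) * (1 - P) +
        (2 / n) * Real.sqrt (((n : ℝ) - 1) * P * (1 - P)) := by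
  have hn0 : (0:ℝ) < n := by positivity
  have hn1 : 1 ≤ n := le_trans (by norm_num) hn
  have hP' : P = (n:ℝ) * b ^ 2 := by
    rw [hP]
    have : ∀ i : Fin n, ‖B i i‖ ^ 2 = b ^ 2 := by
      intro i
      rw [hBdef i i, if_pos rfl, Complex.norm_real, Real.norm_eq_abs, sq_abs]
    rw [Finset.sum_congr rfl fun i _ => this i]
    simp [mul_comm]
  have hdiag : ∀ i, (Bᴴ * B) i i = ((b ^ 2 + ((n : ℝ) - 1) * w ^ 2 : ℝ) : ℂ) := by
    intro i
    rw [Matrix.mul_apply]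
    have h1 : ∀ k : Fin n, Bᴴ i k * B k i
        = if k = i then ((b^2 : ℝ) : ℂ) else ((w^2 : ℝ):ℂ) := by
      intro k
      by_cases hk : k = i
      · subst hk
        simp [Matrix.conjTranspose_apply, hBdef]
        push_cast; ring
      · simp [Matrix.conjTranspose_apply, hBdef, hk]
        push_cast; ring
    rw [Finset.sum_congr rfl fun k _ => h1 k, Finset.sum_ite, Finset.sum_const,
      Finset.sum_const, Finset.filter_eq', if_pos (Finset.mem_univ i)]
    have : Finset.filter (fun k => ¬ k = i) univ = univ.erase i := by
      ext k; simp [Finset.mem_erase]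
    rw [this, Finset.card_erase_of_mem (Finset.mem_univ i), Finset.card_singleton,
      Finset.card_univ, Fintype.card_fin]
    simp only [nsmul_eq_mul, Nat.cast_sub hn1, one_smul]
    push_cast
    ring
  have hoff : ∀ i j, i ≠ j → (Bᴴ * B) i j = ((2 * b * w + ((n : ℝ) - 2) * w ^ 2 : ℝ) : ℂ) := by
    intro i j hij
    rw [Matrix.mul_apply]
    have h1 : ∀ k : Fin n, Bᴴ i k * B k j
        = if k = i then ((b*w : ℝ) : ℂ) else if k = j then ((b*w : ℝ) : ℂ) else ((w^2 : ℝ):ℂ) := by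
      intro k
      by_cases hk : k = i
      · subst hk
        simp [Matrix.conjTranspose_apply, hBdef, hij]
        try (push_cast; ring)
      · by_cases hk2 : k = j
        · subst hk2
          simp [Matrix.conjTranspose_apply, hBdef, hk, Ne.symm hij]
          try (push_cast; ring)
        · simp [Matrix.conjTranspose_apply, hBdef, hk, hk2]
          push_cast; ring
    rw [Finset.sum_congr rfl fun k _ => h1 k]
    rw [← Finset.add_sum_erase _ _ (Finset.mem_univ i), if_pos rfl]
    have hjmem : j ∈ univ.erase i := Finset.mem_erase.2 ⟨Ne.symm hij, Finset.mem_univ j⟩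
    rw [← Finset.add_sum_erase _ _ hjmem, if_neg (Ne.symm hij), if_pos rfl]
    have hrest : ∑ k ∈ (univ.erase i).erase j,
        (if k = i then ((b*w : ℝ) : ℂ) else if k = j then ((b*w : ℝ) : ℂ) else ((w^2 : ℝ):ℂ))
        = (n - 2 : ℕ) • ((w^2 : ℝ):ℂ) := by
      have hval : ∀ k ∈ (univ.erase i).erase j,
          (if k = i then ((b*w : ℝ) : ℂ) else if k = j then ((b*w : ℝ) : ℂ) else ((w^2 : ℝ):ℂ))
          = ((w^2 : ℝ):ℂ) := by
        intro k hk
        obtain ⟨hkj, hki⟩ := by simpa [Finset.mem_erase] using hk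
        rw [if_neg hki, if_neg hkj]
      rw [Finset.sum_congr rfl hval, Finset.sum_const,
        Finset.card_erase_of_mem hjmem, Finset.card_erase_of_mem (Finset.mem_univ i),
        Finset.card_univ, Fintype.card_fin, Nat.sub_sub]
    rw [hrest]
    simp only [nsmul_eq_mul, Nat.cast_sub hn]
    push_cast
    ring
  refine ⟨hP', hdiag, hoff, ?_⟩
  have hc : 0 ≤ 2 * b * w + ((n : ℝ) - 2) * w ^ 2 := by
    have : (0:ℝ) ≤ (n:ℝ) - 2 := by
      have : (2:ℝ) ≤ n := by exact_mod_cast hn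
      linarith
    positivity
  have habs : ∀ i j : Fin n, i ≠ j →
      ‖(Bᴴ * B) i j‖ = 2 * b * w + ((n : ℝ) - 2) * w ^ 2 := by
    intro i j hij
    rw [hoff i j hij, Complex.norm_real, Real.norm_eq_abs, abs_of_nonneg hc]
  have hsum : ∑ i, ∑ j ∈ univ.filter (fun j => j ≠ i),
      ‖(Bᴴ * B) i j‖
      = (n : ℝ) * ((n : ℝ) - 1) * (2 * b * w + ((n : ℝ) - 2) * w ^ 2) := by
    have hinner : ∀ i : Fin n, ∑ j ∈ univ.filter (fun j => j ≠ i),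
        ‖(Bᴴ * B) i j‖ = ((n : ℝ) - 1) * (2 * b * w + ((n : ℝ) - 2) * w ^ 2) := by
      intro i
      rw [Finset.sum_congr rfl (fun j hj => habs i j (Ne.symm (Finset.mem_filter.1 hj).2)),
        Finset.sum_const, Finset.filter_ne', Finset.card_erase_of_mem (Finset.mem_univ i),
        Finset.card_univ, Fintype.card_fin, nsmul_eq_mul]
      rw [Nat.cast_sub hn1]
      push_cast
      ring
    rw [Finset.sum_congr rfl fun i _ => hinner i, Finset.sum_const, Finset.card_univ,
      Fintype.card_fin, nsmul_eq_mul]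
    ring
  rw [hsum]
  have h1P : 1 - P = (n:ℝ) * ((n:ℝ) - 1) * w ^ 2 := by rw [hP']; linarith
  have hsqrt : Real.sqrt (((n : ℝ) - 1) * P * (1 - P)) = (n:ℝ) * ((n:ℝ) - 1) * b * w := by
    have heq : ((n : ℝ) - 1) * P * (1 - P) = ((n:ℝ) * ((n:ℝ) - 1) * b * w) ^ 2 := by
      rw [h1P, hP']; ring
    rw [heq, Real.sqrt_sq (by
      have h1 : (1:ℝ) ≤ n := by exact_mod_cast hn1
      have : (0:ℝ) ≤ (n:ℝ) - 1 := by linarith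
      positivity)]
  rw [hsqrt, h1P]
  field_simp
  ring
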